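/- For all ordinals α < ε₀ and x ∈ ℕ, if h : ℕ → ℕ satisfies h(x) > x for all x, then h_α(x) ≤ h^α(x) − x, where h_α is the length hierarchy and h^α the Hardy hierarchy built from h with the same fundamental sequences. -/

import Mathlib

/-- Ordinal terms below ε₀: a term is a list of exponents,
`cons β γ` denoting ω^β + γ. -/
inductive OT : Type
  | nil : OT
  | cons : OT → OT → OT
deriving DecidableEq

namespace OT

/-- The term 1 = ω^0. -/
def one : OT := cons nil nil

/-- Syntactic concatenation (direct sum) of ordinal terms. -/
def add : OT → OT → OT
  | nil, b => b
  | cons e r, b => cons e (add r b)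

/-- A term ω^{β₁}+...+ω^{β_m} is a successor iff m > 0 and β_m = 0. -/
def isSucc : OT → Bool
  | nil => false
  | cons e nil => e == nil
  | cons _ (cons e r) => isSucc (cons e r)

/-- Remove the last summand ω^0 of a successor term. -/
def pred : OT → OT
  | nil => nil
  | cons _ nil => nil
  | cons e (cons e' r) => cons e (pred (cons e' r))

/-- Limit terms. -/
def isLim (a : OT) : Prop := a ≠ nil ∧ isSucc a = false

/-- ω^β · n as an ordinal term. -/
def rep : ℕ → OT → OT
  | 0, _ => nil
  | n + 1, β => cons β (rep n β)

/-- The standard assignment of fundamental sequences (with ω_x = x+1):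
(γ+ω^{β+1})_x = γ+ω^β·(x+1) and (γ+ω^λ)_x = γ+ω^{λ_x}. -/
def fseq : OT → ℕ → OT
  | nil, _ => nil
  | cons β nil, x =>
      if β = nil then nil
      else if isSucc β then rep (x + 1) (pred β)
      else cons (fseq β x) nil
  | cons β (cons e r), x => cons β (fseq (cons e r) x)

/-- Syntactic ordering of terms (on CNF terms this is the ordinal ordering). -/
def lt : OT → OT → Prop
  | _, nil => False
  | nil, cons _ _ => True
  | cons a r, cons b s => lt a b ∨ (a = b ∧ lt r s)

def le (a b : OT) : Prop := lt a b ∨ a = b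

/-- Cantor normal form: exponents weakly decreasing, all in CNF. -/
def isCNF : OT → Prop
  | nil => True
  | cons b nil => isCNF b
  | cons b (cons e r) => isCNF b ∧ le e b ∧ isCNF (cons e r)

/-- Number of occurrences of the exponent β in a term. -/
def count (β : OT) : OT → ℕ
  | nil => 0
  | cons b r => (if b = β then 1 else 0) + count β r

/-- k-lean: every coefficient (at every level) is ≤ k. -/
def leanOrd (k : ℕ) : OT → Prop
  | nil => True
  | cons b r => count b (cons b r) ≤ k ∧ leanOrd k b ∧ leanOrd k r

end OT

/-- Pointwise-at-x ordering: smallest transitive relation with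
α ⊏_x α+1 and λ_x ⊏_x λ. -/
inductive Ptw (x : ℕ) : OT → OT → Prop
  | succ (a : OT) : Ptw x a (OT.add a OT.one)
  | lim (l : OT) : OT.isLim l → Ptw x (OT.fseq l x) l
  | trans {a b c : OT} : Ptw x a b → Ptw x b c → Ptw x a c

namespace OT

/-- Ordinal value of a term. -/
noncomputable def val : OT → Ordinal.{0}
  | nil => 0
  | cons e r => Ordinal.omega0 ^ val e + val r

lemma val_rep (γ : OT) : ∀ n : ℕ, val (rep n γ) = Ordinal.omega0 ^ val γ * n
  | 0 => by simp [rep, val]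
  | n + 1 => by
    have := val_rep γ n
    simp only [rep, val, this]
    rw [show (n + 1 : ℕ) = 1 + n from by omega]
    push_cast
    rw [mul_add, mul_one]

lemma val_pred : ∀ a : OT, isSucc a = true → val a = val (pred a) + 1
  | cons e nil, hs => by
    have : e = nil := by simpa [isSucc] using hs
    subst this
    simp [val, pred, Ordinal.opow_zero]
  | cons e (cons e' r), hs => by
    have h' : isSucc (cons e' r) = true := by simpa [isSucc] using hs
    have ht := val_pred (cons e' r) h'
    simp only [val] at ht
    simp only [pred, val]
    rw [ht, ← add_assoc]

lemma val_fseq : ∀ a : OT, isLim a → ∀ x : ℕ, val (fseq a x) < val a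
  | cons β nil, hl, x => by
    have hβ : β ≠ nil := by
      intro hb; subst hb
      simpa [isSucc] using hl.2
    by_cases hb : isSucc β = true
    · rw [show fseq (cons β nil) x = rep (x + 1) (pred β) by
        simp [fseq, hβ, hb]]
      rw [val_rep]
      have : val (cons β nil) = Ordinal.omega0 ^ (val (pred β) + 1) := by
        simp [val, val_pred β hb]
      rw [this, Ordinal.opow_add, Ordinal.opow_one]
      exact (mul_lt_mul_iff_right₀
        (Ordinal.opow_pos _ Ordinal.omega0_pos)).2 (Ordinal.nat_lt_omega0 _)
    · have hlim : isLim β := ⟨hβ, by simpa using hb⟩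
      have ih := val_fseq β hlim x
      rw [show fseq (cons β nil) x = cons (fseq β x) nil by
        simp [fseq, hβ, hb]]
      simp only [val, add_zero]
      exact (Ordinal.opow_lt_opow_iff_right Ordinal.one_lt_omega0).2 ih
  | cons β (cons e r), hl, x => by
    have hlim : isLim (cons e r) := ⟨by simp, by simpa [isSucc] using hl.2⟩
    have ih := val_fseq (cons e r) hlim x
    have h2 := add_lt_add_right ih (Ordinal.omega0 ^ OT.val β)
    simp only [val] at h2
    simp only [fseq, val]
    exact h2

lemma val_pred_lt (a : OT) (hs : isSucc a = true) : val (pred a) < val a := by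
  rw [val_pred a hs]
  exact lt_add_one _

end OT

/-- If h(x) > x for all x, then h_α(x) ≤ h^α(x) − x, where `L` is the length
hierarchy and `H` the Hardy hierarchy built from h (same fundamental
sequences), both characterized by their defining equations. -/
theorem stmt12 (h : ℕ → ℕ) (hh : ∀ x, x < h x)
    (L H : OT → ℕ → ℕ)
    (hL0 : ∀ x, L OT.nil x = 0)
    (hLs : ∀ a x, OT.isSucc a = true → L a x = 1 + L (OT.pred a) (h x))
    (hLl : ∀ a x, OT.isLim a → L a x = L (OT.fseq a x) x)
    (hH0 : ∀ x, H OT.nil x = x)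
    (hHs : ∀ a x, OT.isSucc a = true → H a x = H (OT.pred a) (h x))
    (hHl : ∀ a x, OT.isLim a → H a x = H (OT.fseq a x) x) :
    ∀ (a : OT) (x : ℕ), L a x ≤ H a x - x := by
  have key : ∀ o : Ordinal, ∀ a : OT, OT.val a = o →
      (∀ x, x ≤ H a x) ∧ (∀ x, L a x ≤ H a x - x) := by
    intro o
    induction o using Ordinal.induction with
    | h o IH =>
      intro a ha
      subst ha
      rcases eq_or_ne a OT.nil with rfl | hne
      · refine ⟨fun x => (hH0 x).ge, fun x => ?_⟩
        rw [hL0, hH0]; omega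
      by_cases hs : OT.isSucc a = true
      · have hp := IH _ (OT.val_pred_lt a hs) (OT.pred a) rfl
        constructor
        · intro x
          rw [hHs a x hs]
          exact le_trans (hh x).le (hp.1 (h x))
        · intro x
          rw [hLs a x hs, hHs a x hs]
          have h1 := hp.1 (h x)
          have h2 := hp.2 (h x)
          have h3 := hh x
          omega
      · have hlim : OT.isLim a := ⟨hne, by simpa using hs⟩
        constructor
        · intro x
          rw [hHl a x hlim]
          exact (IH _ (OT.val_fseq a hlim x) _ rfl).1 x
        · intro x
          rw [hLl a x hlim, hHl a x hlim]
          exact (IH _ (OT.val_fseq a hlim x) _ rfl).2 x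
  exact fun a => (key (OT.val a) a rfl).2
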